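/- Let n, k, b be integers with 1 ≤ k-1 ≤ b ≤ n and b ≥ k. Then the diameter of the graph G_{n,k,b} equals ⌈(n-k+1)/(b-k+1)⌉. -/

import Mathlib

/-- The maximum element of a finite set of naturals (`0` for the empty set). -/
def fmax (X : Finset ℕ) : ℕ := WithBot.unbotD 0 X.max

/-- The minimum element of a finite set of naturals (`0` for the empty set). -/
def fmin (X : Finset ℕ) : ℕ := WithTop.untopD 0 X.min

/-- The vertex set `V_{n,k,b}`: all `k`-element subsets `X` of `{0,…,n}`
with `max X - min X ≤ b`. -/
def Vnkb (n k b : ℕ) : Finset (Finset ℕ) :=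
  ((Finset.range (n + 1)).powersetCard k).filter (fun X => fmax X - fmin X ≤ b)

/-- The graph `G_{n,k,b}`: two distinct vertices `X, Y` are adjacent iff
`max (X ∪ Y) - min (X ∪ Y) ≤ b`. -/
def Gnkb (n k b : ℕ) : SimpleGraph (Vnkb n k b) where
  Adj X Y := X ≠ Y ∧ fmax (X.1 ∪ Y.1) - fmin (X.1 ∪ Y.1) ≤ b
  symm := by
    constructor
    rintro X Y ⟨h1, h2⟩
    exact ⟨h1.symm, by rwa [Finset.union_comm]⟩
  loopless := by constructor; rintro X ⟨h1, -⟩; exact h1 rfl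

/-- The bandwidth of a finite graph: the minimum over all bijective labellings of the
vertices by `{0, …, |V|-1}` (equivalently `{1, …, |V|}`) of the maximal absolute
label difference along an edge. -/
noncomputable def bandwidth {V : Type*} [Fintype V] (G : SimpleGraph V) : ℕ :=
  sInf {m : ℕ | ∃ f : V ≃ Fin (Fintype.card V),
    ∀ u v : V, G.Adj u v → (((f u : ℕ) : ℤ) - ((f v : ℕ) : ℤ)).natAbs ≤ m}

lemma fmax_eq {X : Finset ℕ} (h : X.Nonempty) : fmax X = X.max' h := by
  simp [fmax, ← Finset.coe_max' h]

lemma fmin_eq {X : Finset ℕ} (h : X.Nonempty) : fmin X = X.min' h := by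
  rw [fmin, ← Finset.coe_min' h]; rfl

lemma le_fmax {X : Finset ℕ} {x : ℕ} (hx : x ∈ X) : x ≤ fmax X := by
  rw [fmax_eq ⟨x, hx⟩]; exact Finset.le_max' _ _ hx

lemma fmin_le {X : Finset ℕ} {x : ℕ} (hx : x ∈ X) : fmin X ≤ x := by
  rw [fmin_eq ⟨x, hx⟩]; exact Finset.min'_le _ _ hx

lemma fmax_mem {X : Finset ℕ} (h : X.Nonempty) : fmax X ∈ X := by
  rw [fmax_eq h]; exact X.max'_mem h

lemma fmin_mem {X : Finset ℕ} (h : X.Nonempty) : fmin X ∈ X := by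
  rw [fmin_eq h]; exact X.min'_mem h

lemma fmax_union {X Y : Finset ℕ} (hX : X.Nonempty) (hY : Y.Nonempty) :
    fmax (X ∪ Y) = max (fmax X) (fmax Y) := by
  rw [fmax_eq (hX.mono Finset.subset_union_left), fmax_eq hX, fmax_eq hY]
  exact Finset.max'_union hX hY

lemma fmin_union {X Y : Finset ℕ} (hX : X.Nonempty) (hY : Y.Nonempty) :
    fmin (X ∪ Y) = min (fmin X) (fmin Y) := by
  rw [fmin_eq (hX.mono Finset.subset_union_left), fmin_eq hX, fmin_eq hY]
  exact Finset.min'_union hX hY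

section main
variable {n k b : ℕ}

lemma mem_Vnkb_iff {X : Finset ℕ} :
    X ∈ Vnkb n k b ↔ (X ⊆ Finset.range (n+1) ∧ X.card = k) ∧ fmax X - fmin X ≤ b := by
  simp [Vnkb, Finset.mem_powersetCard]

variable (hk : 2 ≤ k)
include hk

lemma Vnkb.nonempty {X : Finset ℕ} (hX : X ∈ Vnkb n k b) : X.Nonempty := by
  rw [mem_Vnkb_iff] at hX
  rw [← Finset.card_pos, hX.1.2]; omega

lemma Vnkb.fmax_le {X : Finset ℕ} (hX : X ∈ Vnkb n k b) : fmax X ≤ n := by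
  have h := Vnkb.nonempty hk hX
  rw [mem_Vnkb_iff] at hX
  have := hX.1.1 (fmax_mem h)
  simpa [Nat.lt_succ_iff] using Finset.mem_range.mp this

omit hk in
lemma Vnkb.spread {X : Finset ℕ} (hX : X ∈ Vnkb n k b) : fmax X - fmin X ≤ b :=
  (mem_Vnkb_iff.mp hX).2

lemma Vnkb.lb {X : Finset ℕ} (hX : X ∈ Vnkb n k b) : fmin X + k ≤ fmax X + 1 := by
  have h := Vnkb.nonempty hk hX
  have hsub : X ⊆ Finset.Icc (fmin X) (fmax X) := fun x hx =>
    Finset.mem_Icc.mpr ⟨fmin_le hx, le_fmax hx⟩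
  have := Finset.card_le_card hsub
  rw [(mem_Vnkb_iff.mp hX).1.2, Nat.card_Icc] at this
  omega

end main

lemma fmax_Icc {a c : ℕ} (h : a ≤ c) : fmax (Finset.Icc a c) = c := by
  have hne : (Finset.Icc a c).Nonempty := ⟨a, by simp [h]⟩
  rw [fmax_eq hne]
  refine le_antisymm (Finset.max'_le _ _ _ fun y hy => (Finset.mem_Icc.mp hy).2)
    (Finset.le_max' _ _ (by simp [h]))

lemma fmin_Icc {a c : ℕ} (h : a ≤ c) : fmin (Finset.Icc a c) = a := by
  have hne : (Finset.Icc a c).Nonempty := ⟨a, by simp [h]⟩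
  rw [fmin_eq hne]
  exact le_antisymm (Finset.min'_le _ _ (by simp [h]))
    (Finset.le_min' _ _ _ fun y hy => (Finset.mem_Icc.mp hy).1)

section main2
variable {n k b : ℕ}

/-- interval vertex -/
lemma Ivx_mem (hk : 1 ≤ k) (s : ℕ) (hb : k - 1 ≤ b) (hs : s + (k-1) ≤ n) :
    Finset.Icc s (s + (k-1)) ∈ Vnkb n k b := by
  rw [mem_Vnkb_iff, fmax_Icc (by omega), fmin_Icc (by omega)]
  refine ⟨⟨fun x hx => Finset.mem_range.mpr ?_, ?_⟩, by omega⟩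
  · have := (Finset.mem_Icc.mp hx).2; omega
  · rw [Nat.card_Icc]; omega

end main2

section graph
variable {n k b : ℕ}

lemma edist_le_one (hk : 2 ≤ k) {X Y : Vnkb n k b}
    (h1 : fmax Y.1 ≤ fmin X.1 + b) (h2 : fmax X.1 ≤ fmin Y.1 + b) :
    (Gnkb n k b).edist X Y ≤ 1 := by
  by_cases he : X = Y
  · subst he; simp [SimpleGraph.edist_self]
  · refine le_of_eq (SimpleGraph.edist_eq_one_iff_adj.mpr ⟨he, ?_⟩)
    have hXne := Vnkb.nonempty hk X.2
    have hYne := Vnkb.nonempty hk Y.2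
    rw [fmax_union hXne hYne, fmin_union hXne hYne]
    have h3 : fmin X.1 ≤ fmax X.1 := fmin_le (fmax_mem hXne)
    have h4 : fmin Y.1 ≤ fmax Y.1 := fmin_le (fmax_mem hYne)
    have h5 := Vnkb.spread X.2
    have h6 := Vnkb.spread Y.2
    omega

lemma adj_step (hk : 2 ≤ k) {X Y : Vnkb n k b} (h : (Gnkb n k b).Adj X Y) :
    fmin Y.1 + k ≤ fmin X.1 + b + 1 := by
  have hXne := Vnkb.nonempty hk X.2
  have hYne := Vnkb.nonempty hk Y.2
  obtain ⟨-, hsp⟩ := h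
  rw [fmax_union hXne hYne, fmin_union hXne hYne] at hsp
  have h1 : fmax Y.1 ≤ max (fmax X.1) (fmax Y.1) := le_max_right _ _
  have h2 : min (fmin X.1) (fmin Y.1) ≤ fmin X.1 := min_le_left _ _
  have h3 := Vnkb.lb hk Y.2
  omega

lemma edist_upper (hk : 2 ≤ k) (hkb : k ≤ b) (j : ℕ) :
    ∀ X Y : Vnkb n k b, fmin X.1 ≤ fmin Y.1 →
      fmax Y.1 ≤ fmin X.1 + b + j * (b - k + 1) →
      (Gnkb n k b).edist X Y ≤ j + 1 := by
  induction j with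
  | zero =>
    intro X Y hmin hmax
    have h4 := Vnkb.lb hk X.2
    exact edist_le_one hk (by omega) (by have := Vnkb.spread X.2; omega)
  | succ j ih =>
    intro X Y hmin hmax
    by_cases hbase : fmax Y.1 ≤ fmin X.1 + b
    · refine le_trans (edist_le_one hk hbase ?_) (by exact_mod_cast le_of_lt (by norm_num))
      have := Vnkb.spread X.2
      have := fmin_le (fmax_mem (Vnkb.nonempty hk X.2))
      omega
    · set s := min (fmin X.1 + (b - k + 1)) (fmin Y.1) with hs
      have hYlb := Vnkb.lb hk Y.2
      have hYmax := Vnkb.fmax_le hk Y.2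
      have hsn : s + (k - 1) ≤ n := by
        have : s ≤ fmin Y.1 := min_le_right _ _
        omega
      have hZmem : Finset.Icc s (s + (k-1)) ∈ Vnkb n k b :=
        Ivx_mem (by omega) s (by omega) hsn
      set Z : Vnkb n k b := ⟨_, hZmem⟩ with hZ
      have hZmax : fmax Z.1 = s + (k-1) := fmax_Icc (by omega)
      have hZmin : fmin Z.1 = s := fmin_Icc (by omega)
      have e1 : (Gnkb n k b).edist X Z ≤ 1 := by
        refine edist_le_one hk ?_ ?_
        · rw [hZmax]; omega
        · rw [hZmin]; have := Vnkb.spread X.2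
          have := fmin_le (fmax_mem (Vnkb.nonempty hk X.2)); omega
      have e2 : (Gnkb n k b).edist Z Y ≤ j + 1 := by
        refine ih Z Y ?_ ?_
        · rw [hZmin]; exact min_le_right _ _
        · rw [hZmin]
          rcases le_or_gt (fmin X.1 + (b - k + 1)) (fmin Y.1) with hc | hc
          · have : s = fmin X.1 + (b - k + 1) := min_eq_left hc
            have hmax' := hmax
            rw [this]
            have : (j+1) * (b - k + 1) = (b-k+1) + j * (b-k+1) := by ring
            omega
          · have hsY : s = fmin Y.1 := min_eq_right (le_of_lt hc)
            have := Vnkb.spread Y.2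
            rw [hsY]
            omega
      calc (Gnkb n k b).edist X Y ≤ (Gnkb n k b).edist X Z + (Gnkb n k b).edist Z Y :=
            SimpleGraph.edist_triangle
        _ ≤ 1 + (j + 1) := add_le_add e1 e2
        _ = (j + 1 + 1 : ℕ) := by push_cast; ring

lemma walk_lower (hk : 2 ≤ k) (hkb : k ≤ b) {X Y : Vnkb n k b}
    (w : (Gnkb n k b).Walk X Y) : fmin Y.1 ≤ fmin X.1 + w.length * (b - k + 1) := by
  induction w with
  | nil => simp
  | cons h p ih =>
    have := adj_step hk h
    rw [SimpleGraph.Walk.length_cons]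
    have : (p.length + 1) * (b - k + 1) = (b - k + 1) + p.length * (b-k+1) := by ring
    omega

end graph

/-- For `b ≥ k`, the diameter of `G_{n,k,b}` equals `⌈(n-k+1)/(b-k+1)⌉`. -/
theorem diam_Gnkb (n k b : ℕ)
    (h1 : 1 ≤ k - 1) (h2 : k - 1 ≤ b) (h3 : b ≤ n) (hbk : k ≤ b) :
    ((Gnkb n k b).diam : ℤ) = ⌈((n : ℚ) - (k : ℚ) + 1) / ((b : ℚ) - (k : ℚ) + 1)⌉ := by
  have hk : 2 ≤ k := by omega
  set m := n - k + 1 with hm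
  set c := b - k + 1 with hcdef
  have hc : 0 < c := by omega
  have hm1 : 1 ≤ m := by omega
  set d := (m + c - 1) / c with hd
  -- d * c bounds
  have hd1 : m ≤ d * c := by
    have h := Nat.div_add_mod (m + c - 1) c
    have hr : (m + c - 1) % c < c := Nat.mod_lt _ hc
    rw [mul_comm] at h
    rw [hd]
    generalize hq : (m + c - 1) / c * c = A at h ⊢
    omega
  have hd2 : d * c ≤ m + c - 1 := Nat.div_mul_le_self _ _
  have hdge1 : 1 ≤ d := by
    rw [hd, Nat.one_le_div_iff hc]; omega
  -- upper bound on all edists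
  have hupper : ∀ X Y : Vnkb n k b, (Gnkb n k b).edist X Y ≤ (d : ℕ∞) := by
    have key : ∀ X Y : Vnkb n k b, fmin X.1 ≤ fmin Y.1 →
        (Gnkb n k b).edist X Y ≤ (d : ℕ∞) := by
      intro X Y hmin
      have hYmax := Vnkb.fmax_le hk Y.2
      have hbound : fmax Y.1 ≤ fmin X.1 + b + (d - 1) * c := by
        have hsub : (d - 1) * c = d * c - c := by
          rw [Nat.sub_mul, one_mul]
        generalize d * c = A at hd1 hsub
        omega
      have := edist_upper hk hbk (d - 1) X Y hmin hbound
      calc (Gnkb n k b).edist X Y ≤ ((d - 1 : ℕ) : ℕ∞) + 1 := this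
        _ = (d : ℕ∞) := by
            have h9 : d - 1 + 1 = d := by omega
            exact_mod_cast congrArg (Nat.cast : ℕ → ℕ∞) h9
    intro X Y
    rcases le_total (fmin X.1) (fmin Y.1) with h | h
    · exact key X Y h
    · rw [SimpleGraph.edist_comm]; exact key Y X h
  -- the extremal pair
  have hA : Finset.Icc 0 (0 + (k-1)) ∈ Vnkb n k b := Ivx_mem (by omega) 0 h2 (by omega)
  have hB : Finset.Icc (n-k+1) ((n-k+1) + (k-1)) ∈ Vnkb n k b :=
    Ivx_mem (by omega) (n-k+1) h2 (by omega)
  set A : Vnkb n k b := ⟨_, hA⟩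
  set B : Vnkb n k b := ⟨_, hB⟩
  have hlow : (d : ℕ∞) ≤ (Gnkb n k b).edist A B := by
    have hne : (Gnkb n k b).edist A B ≠ ⊤ :=
      ne_top_of_le_ne_top (by simp) (hupper A B)
    obtain ⟨p, hp⟩ := SimpleGraph.exists_walk_of_edist_ne_top hne
    have hw := walk_lower hk hbk p
    rw [fmin_Icc (by omega), fmin_Icc (by omega)] at hw
    have hL : d ≤ p.length := by
      rw [hd, Nat.div_le_iff_le_mul_add_pred hc, mul_comm]
      generalize p.length * c = A at hw ⊢
      omega
    calc (d : ℕ∞) ≤ (p.length : ℕ∞) := by exact_mod_cast hL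
      _ = (Gnkb n k b).edist A B := hp
  have hediam : (Gnkb n k b).ediam = (d : ℕ∞) :=
    le_antisymm (SimpleGraph.ediam_le_of_edist_le fun X Y => hupper X Y)
      (le_trans hlow SimpleGraph.edist_le_ediam)
  have hdiam : (Gnkb n k b).diam = d := by
    unfold SimpleGraph.diam
    rw [hediam]; exact ENat.toNat_coe d
  rw [hdiam]
  -- now the ceiling arithmetic
  have hmq : ((n : ℚ) - (k : ℚ) + 1) = (m : ℚ) := by
    rw [hm]; push_cast [Nat.cast_sub (by omega : k ≤ n)]; ring
  have hcq : ((b : ℚ) - (k : ℚ) + 1) = (c : ℚ) := by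
    rw [hcdef]; push_cast [Nat.cast_sub (by omega : k ≤ b)]; ring
  rw [hmq, hcq]
  clear_value m c d
  symm
  rw [Int.ceil_eq_iff]
  have hcq0 : (0 : ℚ) < (c : ℚ) := by exact_mod_cast hc
  constructor
  · have hnat : d * c + 1 ≤ m + c := by
      generalize d * c = A at hd2 ⊢
      omega
    have hq2 : (d : ℚ) * c + 1 ≤ (m : ℚ) + c := by exact_mod_cast hnat
    push_cast
    rw [lt_div_iff₀ hcq0]
    nlinarith
  · push_cast
    rw [div_le_iff₀ hcq0]
    exact_mod_cast hd1
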